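/- (Lemma 4 of the paper.) Let DB be an uncertain database all of whose existential probabilities are nonnegative, with each item x carrying a weight w(x) ∈ [0,1]. Then for every nonempty pattern α, WES(α) ≤ wExpSup^cap(α); that is, the value wExpSup^cap(α) is always greater than or equal to the weighted expected support of α. -/

import Mathlib

variable {I : Type*}

/-- An uncertain sequence: a finite list of (item, existential probability) pairs. -/
abbrev USeq (I : Type*) := List (I × ℝ)

/-- An uncertain database: a finite list of uncertain sequences. -/
abbrev UDB (I : Type*) := List (USeq I)

/-- `α` occurs in `S`: some sublist of `S` has item list `α`. -/
def Occurs (α : List I) (S : USeq I) : Prop :=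
  ∃ o : USeq I, o.Sublist S ∧ o.map Prod.fst = α

/-- Maximum occurrence probability of pattern `α` in `S`
(`0` if `α` has no occurrence in `S`; `1` for the empty pattern). -/
noncomputable def maxPrS [DecidableEq I] (α : List I) (S : USeq I) : ℝ :=
  (((S.sublists.filter fun o => decide (o.map Prod.fst = α)).map
      fun o => (o.map Prod.snd).prod).maximum).unbotD 0

/-- Greedy projection: `projSeq α S = some S'` iff `α` occurs in `S`, in which case `S'`
is the suffix of `S` strictly after the last matched position of the greedy (leftmost)
occurrence of `α` in `S`.  For the empty pattern it is `S` itself. -/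
def projSeq [DecidableEq I] : List I → USeq I → Option (USeq I)
  | [], S => some S
  | _ :: _, [] => none
  | i :: α, (x, _) :: rest =>
      if x = i then projSeq α rest else projSeq (i :: α) rest

/-- The projected database `DB|α`. -/
def projDB [DecidableEq I] (α : List I) (DB : UDB I) : UDB I :=
  DB.filterMap (projSeq α)

/-- `P̂_D(i)`: maximum probability of an entry with item `i` over all sequences of `D`
(`0` if `i` occurs in no sequence of `D`). -/
noncomputable def Phat [DecidableEq I] (D : UDB I) (i : I) : ℝ :=
  (((D.flatten.filter fun e => decide (e.1 = i)).map Prod.snd).maximum).unbotD 0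

/-- `maxPr(α)` relative to `DB`: the product of per-step maximum probabilities over the
successively projected databases. -/
noncomputable def maxPrDB [DecidableEq I] (DB : UDB I) (α : List I) : ℝ :=
  ∏ k : Fin α.length, Phat (projDB (α.take k.val) DB) (α.get k)

/-- Expected support of `α` in `DB`. -/
noncomputable def expSup [DecidableEq I] (DB : UDB I) (α : List I) : ℝ :=
  (DB.map fun S => maxPrS α S).sum

/-- `expSup^cap` of a nonempty pattern (junk value `0` on the empty pattern). -/
noncomputable def expSupCap [DecidableEq I] (DB : UDB I) (α : List I) : ℝ :=
  match α.getLast? with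
  | none => 0
  | some i =>
      maxPrDB DB α.dropLast *
        ((projDB α.dropLast DB).map fun S' => maxPrS [i] S').sum

/-- Number of sequences of `D` in which item `i` occurs. -/
def supCount [DecidableEq I] (D : UDB I) (i : I) : ℕ :=
  (D.filter fun S => decide (i ∈ S.map Prod.fst)).length

/-- `expSupport^top` of a nonempty pattern (junk value `0` on the empty pattern). -/
noncomputable def expSupTop [DecidableEq I] (DB : UDB I) (α : List I) : ℝ :=
  match α.getLast? with
  | none => 0
  | some i =>
      maxPrDB DB α.dropLast * Phat (projDB α.dropLast DB) i *
        (supCount (projDB α.dropLast DB) i : ℝ)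

/-- Item `i` occurs in some sequence of `D`. -/
def ItemOccursIn (D : UDB I) (i : I) : Prop :=
  ∃ S ∈ D, i ∈ S.map Prod.fst

/-- `sWeight`: average weight of the items of a pattern. -/
noncomputable def sWeight (w : I → ℝ) (α : List I) : ℝ :=
  (α.map w).sum / (α.length : ℝ)

/-- Maximum weight among the items of a pattern (`0` for the empty pattern). -/
noncomputable def mxWs (w : I → ℝ) (α : List I) : ℝ :=
  ((α.map w).maximum).unbotD 0

/-- Maximum weight among items occurring in some sequence of `D` (`0` if none). -/
noncomputable def mxWDB (w : I → ℝ) (D : UDB I) : ℝ :=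
  ((D.flatten.map fun e => w e.1).maximum).unbotD 0

/-- `wgt^cap`. -/
noncomputable def wgtCap [DecidableEq I] (DB : UDB I) (w : I → ℝ) (α : List I) : ℝ :=
  max (mxWDB w (projDB α.dropLast DB)) (mxWs w α)

/-- Weighted expected support. -/
noncomputable def WES [DecidableEq I] (DB : UDB I) (w : I → ℝ) (α : List I) : ℝ :=
  expSup DB α * sWeight w α

/-- `wExpSup^cap`. -/
noncomputable def wExpSupCap [DecidableEq I] (DB : UDB I) (w : I → ℝ) (α : List I) : ℝ :=
  expSupCap DB α * wgtCap DB w α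

section Helpers

private lemma unbot'_le_of_forall {l : List ℝ} {c : ℝ} (hc : 0 ≤ c) (h : ∀ x ∈ l, x ≤ c) :
    (l.maximum).unbotD 0 ≤ c := by
  rcases hm : l.maximum with _ | y
  · exact hc
  · show y ≤ c
    exact h y (List.maximum_mem hm)

private lemma le_unbot'_of_mem {l : List ℝ} {x : ℝ} (hx : x ∈ l) :
    x ≤ (l.maximum).unbotD 0 := by
  have h := List.le_maximum_of_mem' hx
  rcases hm : l.maximum with _ | y
  · rw [hm] at h; exact absurd h (WithBot.not_coe_le_bot x)
  · rw [hm] at h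
    show x ≤ y
    exact WithBot.coe_le_coe.mp h

private lemma unbot'_nonneg {l : List ℝ} (h : ∀ x ∈ l, 0 ≤ x) :
    0 ≤ (l.maximum).unbotD 0 := by
  rcases hm : l.maximum with _ | y
  · exact le_rfl
  · show (0 : ℝ) ≤ y
    exact h y (List.maximum_mem hm)

@[simp] private lemma projSeq_nil [DecidableEq I] (S : USeq I) : projSeq [] S = some S := by
  unfold projSeq
  rfl

private lemma projSeq_sublist [DecidableEq I] :
    ∀ (S : USeq I) (β : List I) (T : USeq I), projSeq β S = some T → T.Sublist S := by
  intro S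
  induction S with
  | nil =>
    intro β T h
    cases β with
    | nil =>
      simp only [projSeq, Option.some.injEq] at h
      simp [← h]
    | cons i β => simp [projSeq] at h
  | cons a rest ih =>
    intro β T h
    obtain ⟨x, p⟩ := a
    cases β with
    | nil =>
      simp only [projSeq, Option.some.injEq] at h
      simp [← h]
    | cons i β =>
      rw [projSeq] at h
      by_cases hx : x = i
      · rw [if_pos hx] at h
        exact (ih _ _ h).cons _
      · rw [if_neg hx] at h
        exact (ih _ _ h).cons _

private lemma projSeq_tail_le [DecidableEq I] :
    ∀ (S : USeq I) (i : I) (β : List I) (U : USeq I),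
      projSeq (i :: β) S = some U → ∃ T, projSeq β S = some T ∧ U.Sublist T := by
  intro S
  induction S with
  | nil => intro i β U h; simp [projSeq] at h
  | cons a rest ih =>
    intro i β U h
    obtain ⟨x, p⟩ := a
    rw [projSeq] at h
    by_cases hx : x = i
    · rw [if_pos hx] at h
      cases β with
      | nil =>
        refine ⟨(x, p) :: rest, rfl, ?_⟩
        simp only [projSeq, Option.some.injEq] at h
        rw [← h]
        exact List.sublist_cons_self _ _
      | cons j β' =>
        rw [show projSeq (j :: β') ((x, p) :: rest)
              = if x = j then projSeq β' rest else projSeq (j :: β') rest from rfl]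
        by_cases hj : x = j
        · rw [if_pos hj]
          exact ih j β' U h
        · rw [if_neg hj]
          exact ⟨U, h, List.Sublist.refl _⟩
    · rw [if_neg hx] at h
      obtain ⟨T, hT, hUT⟩ := ih i β U h
      cases β with
      | nil =>
        refine ⟨(x, p) :: rest, rfl, ?_⟩
        simp only [projSeq, Option.some.injEq] at hT
        exact (hT ▸ hUT : U.Sublist rest).cons _
      | cons j β' =>
        by_cases hj : x = j
        · obtain ⟨T', hT', hTT'⟩ := ih j β' T hT
          exact ⟨T', by rw [projSeq, if_pos hj]; exact hT', hUT.trans hTT'⟩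
        · exact ⟨T, by rw [projSeq, if_neg hj]; exact hT, hUT⟩

private lemma projSeq_of_sublist [DecidableEq I] :
    ∀ (S o1 o2 : USeq I) (β : List I),
      (o1 ++ o2).Sublist S → o1.map Prod.fst = β →
      ∃ T, projSeq β S = some T ∧ o2.Sublist T := by
  intro S
  induction S with
  | nil =>
    intro o1 o2 β h hβ
    obtain ⟨h1, h2⟩ := List.append_eq_nil_iff.mp (List.sublist_nil.mp h)
    subst h1; subst h2
    simp only [List.map_nil] at hβ
    subst hβ
    exact ⟨[], rfl, List.Sublist.refl _⟩
  | cons a rest ih =>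
    intro o1 o2 β h hβ
    obtain ⟨x, p⟩ := a
    cases o1 with
    | nil =>
      simp only [List.map_nil] at hβ
      subst hβ
      refine ⟨(x, p) :: rest, rfl, by simpa using h⟩
    | cons e o1' =>
      simp only [List.map_cons] at hβ
      subst hβ
      cases h with
      | cons _ h' =>
        obtain ⟨T, hT, hoT⟩ := ih (e :: o1') o2 _ h' rfl
        by_cases hx : x = e.1
        · obtain ⟨T', hT', hTT'⟩ := projSeq_tail_le rest e.1 _ T hT
          exact ⟨T', by rw [projSeq, if_pos hx]; exact hT', hoT.trans hTT'⟩
        · exact ⟨T, by rw [projSeq, if_neg hx]; exact hT, hoT⟩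
      | cons_cons _ h' =>
        obtain ⟨T, hT, hoT⟩ := ih o1' o2 _ h' rfl
        exact ⟨T, by rw [projSeq, if_pos rfl]; exact hT, hoT⟩

private lemma projSeq_append [DecidableEq I] :
    ∀ (S : USeq I) (β γ : List I),
      projSeq (β ++ γ) S = (projSeq β S).bind (projSeq γ) := by
  intro S
  induction S with
  | nil =>
    intro β γ
    cases β with
    | nil => rfl
    | cons i β => simp [projSeq]
  | cons a rest ih =>
    intro β γ
    obtain ⟨x, p⟩ := a
    cases β with
    | nil => simp
    | cons i β =>
      have hL : projSeq ((i :: β) ++ γ) ((x, p) :: rest)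
          = if x = i then projSeq (β ++ γ) rest else projSeq ((i :: β) ++ γ) rest := by
        rw [List.cons_append, projSeq]
      have hR : projSeq (i :: β) ((x, p) :: rest)
          = if x = i then projSeq β rest else projSeq (i :: β) rest := by
        rw [projSeq]
      rw [hL, hR]
      by_cases hx : x = i
      · rw [if_pos hx, if_pos hx]
        exact ih β γ
      · rw [if_neg hx, if_neg hx]
        exact ih (i :: β) γ

private lemma projDB_nil [DecidableEq I] (D : UDB I) : projDB [] D = D := by
  unfold projDB
  rw [show (projSeq ([] : List I) : USeq I → Option (USeq I)) = some from
        funext fun S => projSeq_nil S]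
  exact List.filterMap_some

private lemma projDB_cons' [DecidableEq I] (i : I) (β : List I) (D : UDB I) :
    projDB (i :: β) D = projDB β (projDB [i] D) := by
  unfold projDB
  rw [List.filterMap_filterMap]
  congr 1
  funext S
  rw [show (i :: β) = [i] ++ β from rfl, projSeq_append]

private lemma mem_projDB [DecidableEq I] {D : UDB I} {S T : USeq I} {β : List I}
    (hS : S ∈ D) (h : projSeq β S = some T) : T ∈ projDB β D :=
  List.mem_filterMap.mpr ⟨S, hS, h⟩

private lemma projDB_nonneg [DecidableEq I] {D : UDB I} (hp : ∀ S ∈ D, ∀ e ∈ S, 0 ≤ e.2)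
    (β : List I) : ∀ T ∈ projDB β D, ∀ e ∈ T, 0 ≤ e.2 := by
  intro T hT e he
  obtain ⟨S, hS, hproj⟩ := List.mem_filterMap.mp hT
  exact hp S hS e ((projSeq_sublist S β T hproj).subset he)

private lemma le_Phat [DecidableEq I] {D : UDB I} {S : USeq I} {e : I × ℝ} {i : I}
    (hS : S ∈ D) (he : e ∈ S) (hi : e.1 = i) : e.2 ≤ Phat D i := by
  apply le_unbot'_of_mem
  exact List.mem_map.mpr ⟨e,
    List.mem_filter.mpr ⟨List.mem_flatten.mpr ⟨S, hS, he⟩, by simp [hi]⟩, rfl⟩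

private lemma Phat_nonneg [DecidableEq I] {D : UDB I} (hp : ∀ S ∈ D, ∀ e ∈ S, 0 ≤ e.2)
    (i : I) : 0 ≤ Phat D i := by
  apply unbot'_nonneg
  intro x hx
  obtain ⟨e, he, rfl⟩ := List.mem_map.mp hx
  obtain ⟨S, hS, heS⟩ := List.mem_flatten.mp (List.mem_filter.mp he).1
  exact hp S hS e heS

private lemma maxPrS_nonneg [DecidableEq I] {S : USeq I} (hp : ∀ e ∈ S, 0 ≤ e.2)
    (γ : List I) : 0 ≤ maxPrS γ S := by
  apply unbot'_nonneg
  intro x hx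
  obtain ⟨o, ho, rfl⟩ := List.mem_map.mp hx
  have hsub : o.Sublist S := List.mem_sublists.mp (List.mem_filter.mp ho).1
  apply List.prod_nonneg
  intro y hy
  obtain ⟨e, he, rfl⟩ := List.mem_map.mp hy
  exact hp e (hsub.subset he)

private lemma le_maxPrS [DecidableEq I] {S o : USeq I} {γ : List I}
    (hsub : o.Sublist S) (hγ : o.map Prod.fst = γ) :
    (o.map Prod.snd).prod ≤ maxPrS γ S := by
  apply le_unbot'_of_mem
  exact List.mem_map.mpr ⟨o,
    List.mem_filter.mpr ⟨List.mem_sublists.mpr hsub, by simp [hγ]⟩, rfl⟩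

private lemma maxPrS_le [DecidableEq I] {S : USeq I} {γ : List I} {c : ℝ} (hc : 0 ≤ c)
    (h : ∀ o : USeq I, o.Sublist S → o.map Prod.fst = γ → (o.map Prod.snd).prod ≤ c) :
    maxPrS γ S ≤ c := by
  apply unbot'_le_of_forall hc
  intro x hx
  obtain ⟨o, ho, rfl⟩ := List.mem_map.mp hx
  have h' := List.mem_filter.mp ho
  exact h o (List.mem_sublists.mp h'.1) (by simpa using h'.2)

private lemma maxPrDB_nil [DecidableEq I] (D : UDB I) : maxPrDB D [] = 1 := by
  simp [maxPrDB]

private lemma maxPrDB_cons [DecidableEq I] (D : UDB I) (i : I) (β : List I) :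
    maxPrDB D (i :: β) = Phat D i * maxPrDB (projDB [i] D) β := by
  unfold maxPrDB
  rw [show ∏ k : Fin (i :: β).length, Phat (projDB ((i :: β).take k.val) D) ((i :: β).get k)
        = ∏ k : Fin (β.length + 1), Phat (projDB ((i :: β).take k.val) D) ((i :: β).get k)
      from rfl,
    Fin.prod_univ_succ]
  congr 1
  · have h0 : ((i :: β).take ((0 : Fin (β.length + 1)) : ℕ)) = ([] : List I) := rfl
    rw [h0, projDB_nil]
    rfl
  · apply Finset.prod_congr rfl
    intro k _
    rw [show ((i :: β).take k.succ.val) = i :: β.take k.val from rfl, projDB_cons']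
    rfl

private lemma maxPrDB_nonneg [DecidableEq I] {D : UDB I}
    (hp : ∀ S ∈ D, ∀ e ∈ S, 0 ≤ e.2) (β : List I) : 0 ≤ maxPrDB D β := by
  apply Finset.prod_nonneg
  intro k _
  exact Phat_nonneg (projDB_nonneg hp _) _

private lemma main_prod [DecidableEq I] :
    ∀ (β : List I) (D : UDB I) (S o1 : USeq I),
      S ∈ D → o1.Sublist S → o1.map Prod.fst = β →
      (∀ T ∈ D, ∀ e ∈ T, 0 ≤ e.2) →
      (o1.map Prod.snd).prod ≤ maxPrDB D β := by
  intro β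
  induction β with
  | nil =>
    intro D S o1 _ _ hβ _
    have h0 : o1 = [] := List.map_eq_nil_iff.mp hβ
    subst h0
    simp [maxPrDB_nil]
  | cons i β ih =>
    intro D S o1 hS hsub hβ hp
    cases o1 with
    | nil => simp at hβ
    | cons e o1' =>
      simp only [List.map_cons, List.cons.injEq] at hβ
      obtain ⟨hei, hβ'⟩ := hβ
      rw [maxPrDB_cons, List.map_cons, List.prod_cons]
      have h1 : e.2 ≤ Phat D i := le_Phat hS (hsub.subset List.mem_cons_self) hei
      obtain ⟨T, hT, hT'⟩ := projSeq_of_sublist S [e] o1' [e.1] hsub rfl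
      rw [hei] at hT
      have h2 : (o1'.map Prod.snd).prod ≤ maxPrDB (projDB [i] D) β :=
        ih (projDB [i] D) T o1' (mem_projDB hS hT) hT' hβ' (projDB_nonneg hp _)
      have hnn : 0 ≤ (o1'.map Prod.snd).prod := by
        apply List.prod_nonneg
        intro y hy
        obtain ⟨f, hf, rfl⟩ := List.mem_map.mp hy
        exact hp S hS f (hsub.subset (List.mem_cons_of_mem _ hf))
      exact mul_le_mul h1 h2 hnn (Phat_nonneg hp i)

private lemma perSeq [DecidableEq I] {DB : UDB I} {S S' : USeq I} {β : List I} {i : I}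
    (hS : S ∈ DB) (hp : ∀ T ∈ DB, ∀ e ∈ T, 0 ≤ e.2)
    (hproj : projSeq β S = some S') :
    maxPrS (β ++ [i]) S ≤ maxPrDB DB β * maxPrS [i] S' := by
  have hS'nn : ∀ e ∈ S', 0 ≤ e.2 :=
    fun e he => hp S hS e ((projSeq_sublist _ _ _ hproj).subset he)
  have hc : 0 ≤ maxPrDB DB β * maxPrS [i] S' :=
    mul_nonneg (maxPrDB_nonneg hp β) (maxPrS_nonneg hS'nn _)
  apply maxPrS_le hc
  intro o hsub hγ
  obtain ⟨o1, o2, rfl, h1, h2⟩ := List.map_eq_append_iff.mp hγ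
  cases o2 with
  | nil => simp at h2
  | cons e o2' =>
    simp only [List.map_cons, List.cons.injEq] at h2
    obtain ⟨hei, h2'⟩ := h2
    have ho2' : o2' = [] := List.map_eq_nil_iff.mp h2'
    subst ho2'
    rw [List.map_append, List.prod_append]
    have hb1 : (o1.map Prod.snd).prod ≤ maxPrDB DB β :=
      main_prod β DB S o1 hS ((List.sublist_append_left _ _).trans hsub) h1 hp
    obtain ⟨T, hT, heT⟩ := projSeq_of_sublist S o1 [e] β hsub h1
    rw [hproj, Option.some.injEq] at hT
    have hb2 : ([e].map Prod.snd).prod ≤ maxPrS [i] S' :=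
      le_maxPrS (hT ▸ heT) (by simp [hei])
    have hnn : 0 ≤ ([e].map Prod.snd).prod := by
      simp only [List.map_cons, List.map_nil, List.prod_cons, List.prod_nil, mul_one]
      exact hp S hS e (hsub.subset (by simp))
    exact mul_le_mul hb1 hb2 hnn (maxPrDB_nonneg hp β)

private lemma sum_filterMap_eq {A B : Type*} (p : A → Option B) (g : B → ℝ) :
    ∀ l : List A, ((l.filterMap p).map g).sum = (l.map fun a => ((p a).map g).getD 0).sum := by
  intro l
  induction l with
  | nil => rfl
  | cons a l ih =>
    cases h : p a with
    | none => simp [List.filterMap_cons, h, ih]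
    | some b => simp [List.filterMap_cons, h, ih]

end Helpers

/-- Lemma 4: if all probabilities of `DB` are nonnegative and all weights lie in `[0,1]`,
then for every nonempty pattern `α`, `WES(α) ≤ wExpSup^cap(α)`. -/
theorem WES_le_wExpSupCap [DecidableEq I]
    (DB : UDB I) (hp : ∀ S ∈ DB, ∀ e ∈ S, 0 ≤ e.2)
    (w : I → ℝ) (hw : ∀ x : I, w x ∈ Set.Icc (0 : ℝ) 1)
    (α : List I) (hα : α ≠ []) :
    WES DB w α ≤ wExpSupCap DB w α := by
  have hw0 : ∀ x, 0 ≤ w x := fun x => (hw x).1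
  set i := α.getLast hα with hidef
  set β := α.dropLast with hβdef
  have hαeq : β ++ [i] = α := List.dropLast_append_getLast hα
  have hlast : α.getLast? = some i := List.getLast?_eq_getLast hα
  have hcapeq : expSupCap DB α
      = maxPrDB DB β * ((projDB β DB).map fun S' => maxPrS [i] S').sum := by
    simp only [expSupCap, hlast, ← hβdef]
  have hES : expSup DB α ≤ expSupCap DB α := by
    rw [hcapeq]
    unfold expSup
    rw [show projDB β DB = DB.filterMap (projSeq β) from rfl, sum_filterMap_eq,
      ← List.sum_map_mul_left]
    apply List.sum_le_sum
    intro S hS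
    cases hproj : projSeq β S with
    | none =>
      have hz : maxPrS α S = 0 := by
        unfold maxPrS
        have hfil : (S.sublists.filter fun o => decide (o.map Prod.fst = α)) = [] := by
          rw [List.filter_eq_nil_iff]
          intro o ho hdec
          have hoα : o.map Prod.fst = α := of_decide_eq_true hdec
          rw [← hαeq] at hoα
          obtain ⟨o1, o2, rfl, h1, _⟩ := List.map_eq_append_iff.mp hoα
          obtain ⟨T, hT, _⟩ := projSeq_of_sublist S o1 o2 β (List.mem_sublists.mp ho) h1
          rw [hproj] at hT
          cases hT
        rw [hfil]
        rfl
      rw [hz]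
      simp
    | some S' =>
      have h := perSeq hS hp hproj (i := i)
      rw [hαeq] at h
      simpa [hproj] using h
  have hsw0 : 0 ≤ sWeight w α := by
    apply div_nonneg _ (Nat.cast_nonneg _)
    apply List.sum_nonneg
    intro x hx
    obtain ⟨a, _, rfl⟩ := List.mem_map.mp hx
    exact hw0 a
  have hlen : (0 : ℝ) < (α.length : ℝ) := by
    exact_mod_cast List.length_pos_iff.mpr hα
  have hswle : sWeight w α ≤ mxWs w α := by
    unfold sWeight
    rw [div_le_iff₀ hlen]
    calc (α.map w).sum ≤ (α.map w).length • mxWs w α :=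
          List.sum_le_card_nsmul _ _ (fun x hx => le_unbot'_of_mem hx)
      _ = mxWs w α * (α.length : ℝ) := by
          rw [List.length_map, nsmul_eq_mul]; ring
  have hwcap : sWeight w α ≤ wgtCap DB w α := hswle.trans (le_max_right _ _)
  have hcap0 : 0 ≤ expSupCap DB α := by
    rw [hcapeq]
    apply mul_nonneg (maxPrDB_nonneg hp β)
    apply List.sum_nonneg
    intro x hx
    obtain ⟨S', hS', rfl⟩ := List.mem_map.mp hx
    exact maxPrS_nonneg (fun e he => projDB_nonneg hp β S' hS' e he) _
  calc WES DB w α = expSup DB α * sWeight w α := rfl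
    _ ≤ expSupCap DB α * wgtCap DB w α := mul_le_mul hES hwcap hsw0 hcap0
    _ = wExpSupCap DB w α := rfl
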